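/- Let r ≥ 2 and t ≥ 2 with t ≤ 2 + 1/(r−1), and let G = K_{1,t,…,t} be the complete (r+1)-partite graph with one part of size 1 and r parts of size t. Then q₂(G) = tr − t + 1 = δ(G), where δ(G) denotes the minimum degree of G. In particular the only such graphs are K_{1,2,…,2} (for any r ≥ 2) and K_{1,3,3} (with r = 2, t = 3). -/

import Mathlib

open Matrix SimpleGraph
open scoped Classical

/-- The `k`-th largest eigenvalue (1-indexed, counted with multiplicity) of a real
symmetric (Hermitian) matrix; junk value `0` if `M` is not Hermitian or `k` is out of range. -/
noncomputable def kthEig {V : Type*} [Fintype V] [DecidableEq V]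
    (M : Matrix V V ℝ) (k : ℕ) : ℝ :=
  if hM : M.IsHermitian then
    if h : k - 1 < Fintype.card V then
      letI f : Fin (Fintype.card V) → ℝ := hM.eigenvalues ∘ (Fintype.equivFin V).symm
      (f ∘ Tuple.sort f) (Fin.rev ⟨k - 1, h⟩)
    else 0
  else 0

/-- The signless Laplacian `Q(G) = D(G) + A(G)` of a simple graph `G`. -/
noncomputable def signlessLap {V : Type*} [Fintype V] [DecidableEq V]
    (G : SimpleGraph V) [DecidableRel G.Adj] : Matrix V V ℝ :=
  G.degMatrix ℝ + G.adjMatrix ℝ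

/-- `qEig G k` is the `k`-th largest signless Laplacian eigenvalue `q_k(G)`. -/
noncomputable def qEig {V : Type*} [Fintype V] [DecidableEq V]
    (G : SimpleGraph V) [DecidableRel G.Adj] (k : ℕ) : ℝ :=
  kthEig (signlessLap G) k

/-- `c` is a bipartite connected component of `H`: the vertex set of the component splits
into two disjoint classes `U`, `W` such that every edge of the component joins `U` and `W`. -/
def IsBipartiteComponent {V : Type*} (H : SimpleGraph V) (c : H.ConnectedComponent) : Prop :=
  ∃ U W : Set V, U ∪ W = c.supp ∧ Disjoint U W ∧
    ∀ ⦃u v : V⦄, u ∈ c.supp → H.Adj u v → (u ∈ U ∧ v ∈ W) ∨ (u ∈ W ∧ v ∈ U)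

/-- `c` is a balanced bipartite connected component of `H`: bipartite with vertex classes
of equal size. -/
def IsBalancedBipartiteComponent {V : Type*} (H : SimpleGraph V)
    (c : H.ConnectedComponent) : Prop :=
  ∃ U W : Set V, U ∪ W = c.supp ∧ Disjoint U W ∧ U.ncard = W.ncard ∧
    ∀ ⦃u v : V⦄, u ∈ c.supp → H.Adj u v → (u ∈ U ∧ v ∈ W) ∨ (u ∈ W ∧ v ∈ U)

/-- `G` is the complete multipartite graph whose parts are the fibers of `p`:
two vertices are adjacent iff they lie in different parts. -/
def IsCompleteMultipartiteWith {V ι : Type*} (G : SimpleGraph V) (p : V → ι) : Prop :=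
  ∀ u v : V, G.Adj u v ↔ p u ≠ p v

lemma card_filter_comp_equiv {m m' : Type*} [Fintype m] [Fintype m'] [DecidableEq m]
    [DecidableEq m'] (σ : m' ≃ m) (P : m → Prop) :
    (Finset.univ.filter fun i => P (σ i)).card = (Finset.univ.filter P).card := by
  refine Finset.card_bij (fun i _ => σ i) ?_ ?_ ?_
  · intro a ha
    simp only [Finset.mem_filter, Finset.mem_univ, true_and] at ha ⊢
    exact ha
  · intro a _ b _ h
    exact σ.injective h
  · intro b hb
    simp only [Finset.mem_filter, Finset.mem_univ, true_and] at hb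
    exact ⟨σ.symm b, by simpa using hb, by simp⟩

lemma sorted_second_largest {m : ℕ} (f : Fin m → ℝ) (lam : ℝ) (h : 1 < m)
    (hgt : (Finset.univ.filter fun i => lam < f i).card ≤ 1)
    (hge : 2 ≤ (Finset.univ.filter fun i => lam ≤ f i).card) :
    (f ∘ Tuple.sort f) (Fin.rev ⟨1, h⟩) = lam := by
  set g : Fin m → ℝ := f ∘ Tuple.sort f with hgdef
  have hmono := Tuple.monotone_sort f
  have hc1 : (Finset.univ.filter fun i => lam < g i).card ≤ 1 := by
    rw [show (Finset.univ.filter fun i => lam < g i).card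
        = (Finset.univ.filter fun i => lam < f i).card from
      card_filter_comp_equiv (Tuple.sort f) (fun j => lam < f j)]
    exact hgt
  have hc2 : 2 ≤ (Finset.univ.filter fun i => lam ≤ g i).card := by
    rw [show (Finset.univ.filter fun i => lam ≤ g i).card
        = (Finset.univ.filter fun i => lam ≤ f i).card from
      card_filter_comp_equiv (Tuple.sort f) (fun j => lam ≤ f j)]
    exact hge
  have hi0 : (Fin.rev ⟨1, h⟩ : Fin m).val = m - 2 := by
    simp [Fin.val_rev]
  set i0 : Fin m := Fin.rev ⟨1, h⟩ with hi0def
  show g i0 = lam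
  by_contra hne
  rcases lt_or_gt_of_ne hne with hlt | hgt2
  · -- g i0 < lam : at most one index can have lam ≤ g
    obtain ⟨a, ha, b, hb, hab⟩ := Finset.one_lt_card.1
      (show 1 < (Finset.univ.filter fun i => lam ≤ g i).card by omega)
    simp only [Finset.mem_filter, Finset.mem_univ, true_and] at ha hb
    have hgta : i0 < a := by
      by_contra hcon
      push_neg at hcon
      exact absurd (le_trans ha (hmono hcon)) (not_le.2 hlt)
    have hgtb : i0 < b := by
      by_contra hcon
      push_neg at hcon
      exact absurd (le_trans hb (hmono hcon)) (not_le.2 hlt)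
    have hav : a.val = m - 1 := by
      have := a.isLt; have := Fin.lt_def.1 hgta; omega
    have hbv : b.val = m - 1 := by
      have := b.isLt; have := Fin.lt_def.1 hgtb; omega
    exact hab (Fin.ext (by omega))
  · -- lam < g i0: then i0 and last both exceed lam
    have hlast : lam < g ⟨m - 1, by omega⟩ := by
      refine lt_of_lt_of_le hgt2 (hmono ?_)
      rw [Fin.le_def]
      show i0.val ≤ m - 1
      omega
    have : 1 < (Finset.univ.filter fun i => lam < g i).card := by
      refine Finset.one_lt_card.2 ⟨i0, ?_, ⟨m - 1, by omega⟩, ?_, ?_⟩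
      · simp [hgt2]
      · simp [hlast]
      · have hval : i0.val ≠ m - 1 := by
          rw [hi0]
          omega
        exact Fin.ne_of_val_ne hval
    omega


lemma inner_eq_dot {V : Type*} [Fintype V] (x y : EuclideanSpace ℝ V) :
    (inner ℝ x y : ℝ) = (x : V → ℝ) ⬝ᵥ (y : V → ℝ) := by
  simp [PiLp.inner_apply, dotProduct, RCLike.inner_apply, starRingEnd_apply, mul_comm]

lemma count_eig_gt_le_one {V : Type*} [Fintype V] [DecidableEq V] {M : Matrix V V ℝ}
    (hM : M.IsHermitian) (lam : ℝ) (c : V → ℝ)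
    (hq : ∀ x : V → ℝ, c ⬝ᵥ x = 0 → x ⬝ᵥ (M *ᵥ x) ≤ lam * (x ⬝ᵥ x)) :
    (Finset.univ.filter fun i => lam < hM.eigenvalues i).card ≤ 1 := by
  by_contra hc
  push_neg at hc
  obtain ⟨i, hi, j, hj, hij⟩ := Finset.one_lt_card.1 hc
  simp only [Finset.mem_filter, Finset.mem_univ, true_and] at hi hj
  set u : V → ℝ := ⇑(hM.eigenvectorBasis i) with hu
  set v : V → ℝ := ⇑(hM.eigenvectorBasis j) with hv
  have horth := hM.eigenvectorBasis.orthonormal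
  rw [orthonormal_iff_ite] at horth
  have huu : u ⬝ᵥ u = 1 := by
    have := horth i i; rw [if_pos rfl] at this; rw [← inner_eq_dot]; exact this
  have hvv : v ⬝ᵥ v = 1 := by
    have := horth j j; rw [if_pos rfl] at this; rw [← inner_eq_dot]; exact this
  have huv : u ⬝ᵥ v = 0 := by
    have := horth i j; rw [if_neg hij] at this; rw [← inner_eq_dot]; exact this
  have hvu : v ⬝ᵥ u = 0 := by
    have := horth j i; rw [if_neg (Ne.symm hij)] at this; rw [← inner_eq_dot]; exact this
  have hMu : M *ᵥ u = hM.eigenvalues i • u := hM.mulVec_eigenvectorBasis i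
  have hMv : M *ᵥ v = hM.eigenvalues j • v := hM.mulVec_eigenvectorBasis j
  obtain ⟨a, b, hab0, habl⟩ : ∃ a b : ℝ, ¬(a = 0 ∧ b = 0) ∧ c ⬝ᵥ (a • u + b • v) = 0 := by
    by_cases hcu : c ⬝ᵥ u = 0
    · exact ⟨1, 0, by simp, by simp [dotProduct_add, dotProduct_smul, hcu]⟩
    · refine ⟨c ⬝ᵥ v, -(c ⬝ᵥ u), fun h => hcu (by simpa using h.2), ?_⟩
      simp only [dotProduct_add, dotProduct_smul, smul_eq_mul]
      ring
  set x : V → ℝ := a • u + b • v with hx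
  have hqx : x ⬝ᵥ (M *ᵥ x) = a ^ 2 * hM.eigenvalues i + b ^ 2 * hM.eigenvalues j := by
    simp only [hx, mulVec_add, mulVec_smul, hMu, hMv, add_dotProduct, dotProduct_add,
      smul_dotProduct, dotProduct_smul, smul_eq_mul, huu, hvv, huv, hvu]
    ring
  have hxx : x ⬝ᵥ x = a ^ 2 + b ^ 2 := by
    simp only [hx, add_dotProduct, dotProduct_add, smul_dotProduct, dotProduct_smul,
      smul_eq_mul, huu, hvv, huv, hvu]
    ring
  have hle := hq x habl
  rw [hqx, hxx] at hle
  have : a ≠ 0 ∨ b ≠ 0 := by tauto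
  rcases this with ha | hb
  · have h2 : 0 < a ^ 2 := by positivity
    nlinarith [sq_nonneg b]
  · have h2 : 0 < b ^ 2 := by positivity
    nlinarith [sq_nonneg a]

lemma two_le_count_eig_ge {V : Type*} [Fintype V] [DecidableEq V] {M : Matrix V V ℝ}
    (hM : M.IsHermitian) (lam : ℝ) (y z : V → ℝ)
    (hy : M *ᵥ y = lam • y) (hz : M *ᵥ z = lam • z)
    (hind : ∀ a b : ℝ, a • y + b • z = 0 → a = 0 ∧ b = 0) :
    2 ≤ (Finset.univ.filter fun i => lam ≤ hM.eigenvalues i).card := by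
  set b := hM.eigenvectorBasis with hb
  have htrans : Mᵀ = M := by
    have := hM
    rwa [Matrix.IsHermitian, conjTranspose_eq_transpose_of_trivial] at this
  have hsymm : ∀ u w : V → ℝ, u ⬝ᵥ (M *ᵥ w) = (M *ᵥ u) ⬝ᵥ w := by
    intro u w
    rw [dotProduct_mulVec, ← mulVec_transpose, htrans]
  -- expansion in the eigenbasis
  have hexp : ∀ w : V → ℝ,
      w = ∑ k : V, ((⇑(b k) : V → ℝ) ⬝ᵥ w) • (⇑(b k) : V → ℝ) := by
    intro w
    have h := b.sum_repr' (WithLp.toLp 2 w : EuclideanSpace ℝ V)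
    funext ve
    have h3 := congrFun (congrArg (fun (z : EuclideanSpace ℝ V) => (z : V → ℝ)) h) ve
    simp only at h3
    rw [show w ve = (∑ k, (inner ℝ (b k) (WithLp.toLp 2 w : EuclideanSpace ℝ V) : ℝ) • b k
        : EuclideanSpace ℝ V) ve from h3.symm]
    rw [WithLp.ofLp_sum, Finset.sum_apply]
    rw [Finset.sum_apply ve Finset.univ
      (fun k => ((⇑(b k) : V → ℝ) ⬝ᵥ w) • (⇑(b k) : V → ℝ))]
    refine Finset.sum_congr rfl fun k _ => ?_
    rw [inner_eq_dot]
    rfl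
  -- coefficients vanish for eigenvalues below lam
  have hcoef : ∀ (w : V → ℝ), M *ᵥ w = lam • w → ∀ k : V,
      hM.eigenvalues k ≠ lam → (⇑(b k) : V → ℝ) ⬝ᵥ w = 0 := by
    intro w hw k hk
    have h1 : (⇑(b k) : V → ℝ) ⬝ᵥ (M *ᵥ w) = hM.eigenvalues k * ((⇑(b k) : V → ℝ) ⬝ᵥ w) := by
      rw [hsymm, hM.mulVec_eigenvectorBasis k, smul_dotProduct, smul_eq_mul]
    rw [hw, dotProduct_smul, smul_eq_mul] at h1
    by_contra hne
    exact hk (mul_right_cancel₀ hne h1.symm)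
  by_contra hcard
  push_neg at hcard
  set S := Finset.univ.filter fun i => lam ≤ hM.eigenvalues i with hS
  have hcard1 : S.card ≤ 1 := by omega
  have hrep : ∀ (w : V → ℝ), M *ᵥ w = lam • w →
      w = ∑ k ∈ S, ((⇑(b k) : V → ℝ) ⬝ᵥ w) • (⇑(b k) : V → ℝ) := by
    intro w hw
    conv_lhs => rw [hexp w]
    refine (Finset.sum_subset (Finset.subset_univ S) ?_).symm
    intro k _ hkS
    have hklt : ¬ lam ≤ hM.eigenvalues k := by
      intro hcon
      exact hkS (by simp [hS, hcon])
    rw [hcoef w hw k (by intro hEq; exact hklt (le_of_eq hEq.symm)), zero_smul]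
  have hyne : y ≠ 0 := by
    intro hy0
    have := hind 1 0 (by simp [hy0])
    exact one_ne_zero this.1
  rcases S.eq_empty_or_nonempty with hSe | ⟨k0, hk0⟩
  · exact hyne (by rw [hrep y hy, hSe, Finset.sum_empty])
  · have hSsing : S = {k0} := by
      refine Finset.eq_singleton_iff_unique_mem.2 ⟨hk0, fun x hx => Finset.card_le_one.1 hcard1 x hx k0 hk0⟩
    have hyrep := hrep y hy
    have hzrep := hrep z hz
    rw [hSsing, Finset.sum_singleton] at hyrep hzrep
    set ry := (⇑(b k0) : V → ℝ) ⬝ᵥ y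
    set rz := (⇑(b k0) : V → ℝ) ⬝ᵥ z
    have hcomb : rz • y + (-ry) • z = 0 := by
      rw [hyrep, hzrep, smul_smul, smul_smul, ← add_smul,
        show rz * ry + -ry * rz = 0 by ring, zero_smul]
    have h00 := hind rz (-ry) hcomb
    have hry0 : ry = 0 := by
      have := h00.2; linarith [this]
    exact hyne (by rw [hyrep, hry0, zero_smul])

set_option maxHeartbeats 1000000 in
/-- Let `r, t ≥ 2` with `t ≤ 2 + 1/(r-1)` and let `G = K_{1,t,…,t}` be the complete
`(r+1)`-partite graph with one part of size `1` and `r` parts of size `t`. Then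
`q₂(G) = tr - t + 1 = δ(G)`; in particular the only such graphs are `K_{1,2,…,2}`
(for any `r ≥ 2`) and `K_{1,3,3}` (with `r = 2`, `t = 3`). -/
theorem q2_of_K1tt_small_t (r t : ℕ) (hr : 2 ≤ r) (ht : 2 ≤ t)
    (htr : (t : ℝ) ≤ 2 + 1 / ((r : ℝ) - 1))
    (G : SimpleGraph (Fin (r * t + 1))) [DecidableRel G.Adj]
    (p : Fin (r * t + 1) → Fin (r + 1))
    (hp : IsCompleteMultipartiteWith G p)
    (h0 : {v | p v = 0}.ncard = 1)
    (hi : ∀ i : Fin (r + 1), i ≠ 0 → {v | p v = i}.ncard = t) :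
    qEig G 2 = (t : ℝ) * r - t + 1 ∧
    (G.minDegree : ℝ) = (t : ℝ) * r - t + 1 ∧
    (t = 2 ∨ (r = 2 ∧ t = 3)) := by
  have hrR : (2:ℝ) ≤ (r:ℝ) := by exact_mod_cast hr
  have htR : (2:ℝ) ≤ (t:ℝ) := by exact_mod_cast ht
  have hr1R : (0:ℝ) < (r:ℝ) - 1 := by linarith
  -- part 3
  have hpart3 : t = 2 ∨ (r = 2 ∧ t = 3) := by
    by_cases hr2 : r = 2
    · subst hr2
      have h3' : t ≤ 3 := by norm_num at htr; exact_mod_cast htr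
      rcases (by omega : t = 2 ∨ t = 3) with h | h
      · exact Or.inl h
      · exact Or.inr ⟨rfl, h⟩
    · left
      have hr3 : 3 ≤ r := by omega
      have hr3R : (3:ℝ) ≤ (r:ℝ) := by exact_mod_cast hr3
      have hhalf : 1 / ((r:ℝ) - 1) ≤ 1 / 2 := by
        apply one_div_le_one_div_of_le <;> linarith
      have ht3 : (t:ℝ) < 3 := by linarith
      have : t < 3 := by exact_mod_cast ht3
      omega
  -- inequality (t-1)(r-1) ≤ r
  have h22 : ((t:ℝ) - 2) * ((r:ℝ) - 1) ≤ 1 := by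
    have h2 : (t:ℝ) - 2 ≤ 1 / ((r:ℝ) - 1) := by linarith
    have h3 : ((t:ℝ) - 2) * ((r:ℝ) - 1) ≤ (1 / ((r:ℝ) - 1)) * ((r:ℝ) - 1) :=
      mul_le_mul_of_nonneg_right h2 (by linarith)
    rwa [one_div, inv_mul_cancel₀ (ne_of_gt hr1R)] at h3
  have htr' : ((t:ℝ) - 1) * ((r:ℝ) - 1) ≤ (r:ℝ) := by nlinarith [h22]
  -- nat facts
  have htn : t ≤ r * t := Nat.le_mul_of_pos_left t (by omega)
  -- the special vertex
  obtain ⟨v0, hv0⟩ := Set.ncard_eq_one.mp h0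
  have hv0p : p v0 = 0 := by
    have : v0 ∈ {v | p v = 0} := by rw [hv0]; exact Set.mem_singleton _
    exact this
  have hv0iff : ∀ v, p v = 0 ↔ v = v0 := by
    intro v
    constructor
    · intro hv
      have hmem : v ∈ {u | p u = 0} := hv
      rw [hv0] at hmem
      exact hmem
    · intro hv; rw [hv]; exact hv0p
  -- ncard to Finset card
  have hncard : ∀ i : Fin (r+1), {v | p v = i}.ncard
      = (Finset.univ.filter fun v => p v = i).card := by
    intro i
    rw [← Set.ncard_coe_finset]
    congr 1
    ext v; simp
  have hfilter0 : (Finset.univ.filter fun v => p v = (0 : Fin (r+1))) = {v0} := by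
    ext v; simp [hv0iff]
  have hcard_part : ∀ i : Fin (r+1), i ≠ 0 →
      (Finset.univ.filter fun v => p v = i).card = t := by
    intro i hi0
    rw [← hncard]; exact hi i hi0
  -- degrees
  have hdeg : ∀ v, G.degree v
      = (r*t+1) - (Finset.univ.filter fun u => p u = p v).card := by
    intro v
    have hnb : G.neighborFinset v
        = Finset.univ \ (Finset.univ.filter fun u => p u = p v) := by
      ext u
      simp only [mem_neighborFinset, Finset.mem_sdiff, Finset.mem_univ, true_and,
        Finset.mem_filter]
      rw [hp v u]
      exact ⟨fun h h2 => h h2.symm, fun h h2 => h h2.symm⟩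
    rw [← card_neighborFinset_eq_degree, hnb, Finset.card_sdiff_of_subset (Finset.subset_univ _),
      Finset.card_univ, Fintype.card_fin]
  have hdegt : ∀ v, p v ≠ 0 → G.degree v = r*t+1 - t := by
    intro v hv
    rw [hdeg v, hcard_part (p v) hv]
  have hdeg0 : G.degree v0 = r * t := by
    rw [hdeg v0, hv0p, hfilter0]
    simp
  -- minimum degree
  have hmd : G.minDegree = r*t+1 - t := by
    have i1 : Fin (r+1) := ⟨1, by omega⟩
    have hne1 : (⟨1, by omega⟩ : Fin (r+1)) ≠ 0 := by
      intro hEq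
      have := congrArg Fin.val hEq
      simp at this
    obtain ⟨w1, hw1⟩ : ∃ w, w ∈ Finset.univ.filter fun v => p v = (⟨1, by omega⟩ : Fin (r+1)) := by
      have hpos : 0 < (Finset.univ.filter fun v => p v = (⟨1, by omega⟩ : Fin (r+1))).card := by
        rw [hcard_part _ hne1]; omega
      exact Finset.card_pos.1 hpos
    have hpw1 : p w1 = ⟨1, by omega⟩ := by
      simp only [Finset.mem_filter] at hw1; exact hw1.2
    have hdw1 : G.degree w1 = r*t+1 - t := hdegt w1 (by rw [hpw1]; exact hne1)
    refine le_antisymm (hdw1 ▸ G.minDegree_le_degree w1) ?_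
    refine G.le_minDegree_of_forall_le_degree _ fun v => ?_
    by_cases hv : p v = 0
    · rw [(hv0iff v).1 hv, hdeg0]; omega
    · rw [hdegt v hv]
  have hlamcast : ((r*t+1-t : ℕ) : ℝ) = (t:ℝ) * r - t + 1 := by
    have : ((r*t+1-t : ℕ) : ℝ) = ((r*t+1 : ℕ) : ℝ) - (t:ℕ) := by
      rw [Nat.cast_sub (by omega)]
    rw [this]; push_cast; ring
  refine ⟨?_, by rw [hmd, hlamcast], hpart3⟩
  set lam : ℝ := (t:ℝ) * r - t + 1 with hlamdef
  have hlamcast' : ((r*t+1-t : ℕ) : ℝ) = lam := hlamcast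
  -- entries of the signless Laplacian
  have hQent : ∀ v w, signlessLap G v w
      = (if v = w then (G.degree v : ℝ) else 0) + (if p w = p v then 0 else 1) := by
    intro v w
    rw [signlessLap, Matrix.add_apply, degMatrix, Matrix.diagonal_apply, adjMatrix_apply]
    congr 1
    have hiff : G.Adj v w ↔ ¬ (p w = p v) := by
      rw [hp v w]; exact ⟨fun h hc => h hc.symm, fun h hc => h hc.symm⟩
    by_cases h : p w = p v
    · rw [if_neg (fun hc => (hiff.1 hc) h), if_pos h]
    · rw [if_pos (hiff.2 h), if_neg h]
  have hQH : (signlessLap G).IsHermitian := by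
    rw [Matrix.IsHermitian, conjTranspose_eq_transpose_of_trivial, signlessLap,
      Matrix.transpose_add]
    exact congrArg₂ HAdd.hAdd (isSymm_degMatrix (R := ℝ) (G := G)) (isSymm_adjMatrix (α := ℝ) (G := G))
  have hdegR : ∀ v, (G.degree v : ℝ) = lam + (if v = v0 then (t:ℝ) - 1 else 0) := by
    intro v
    by_cases hv : v = v0
    · rw [hv, hdeg0, if_pos rfl, hlamdef]
      push_cast; ring
    · rw [hdegt v (fun hc => hv ((hv0iff v).1 hc)), if_neg hv, hlamcast']
      ring
  -- the quadratic form identity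
  have hquad : ∀ x : Fin (r*t+1) → ℝ,
      x ⬝ᵥ (signlessLap G *ᵥ x) = lam * (x ⬝ᵥ x)
        + ((∑ v, x v) ^ 2
            - (∑ i : Fin (r+1), (∑ v ∈ Finset.univ.filter fun v => p v = i, x v) ^ 2)
            + ((t:ℝ) - 1) * x v0 ^ 2) := by
    intro x
    have h1 : x ⬝ᵥ (signlessLap G *ᵥ x)
        = ∑ v, (x v * ((G.degree v : ℝ) * x v)
            + ∑ w, (if p w = p v then 0 else x v * x w)) := by
      rw [dotProduct]
      refine Finset.sum_congr rfl fun v _ => ?_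
      rw [mulVec, dotProduct, Finset.mul_sum]
      rw [show ∑ w, x v * (signlessLap G v w * x w)
          = ∑ w, ((if v = w then x v * ((G.degree v:ℝ) * x w) else 0)
              + (if p w = p v then 0 else x v * x w)) from
        Finset.sum_congr rfl fun w _ => by
          rw [hQent v w]
          by_cases hc1 : v = w <;> by_cases hc2 : p w = p v <;>
            simp [hc1, hc2] <;> ring]
      rw [Finset.sum_add_distrib, Finset.sum_ite_eq Finset.univ v
        (fun w => x v * ((G.degree v:ℝ) * x w)), if_pos (Finset.mem_univ v)]
    have h2 : ∑ v, ∑ w, (if p w = p v then 0 else x v * x w)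
        = (∑ v, x v) ^ 2
          - ∑ i : Fin (r+1), (∑ v ∈ Finset.univ.filter fun v => p v = i, x v) ^ 2 := by
      have hsplit : ∀ v : Fin (r*t+1), ∑ w, (if p w = p v then 0 else x v * x w)
          = (∑ w, x v * x w) - ∑ w, (if p w = p v then x v * x w else 0) := by
        intro v
        rw [← Finset.sum_sub_distrib]
        refine Finset.sum_congr rfl fun w _ => ?_
        by_cases h : p w = p v <;> simp [h]
      rw [Finset.sum_congr rfl fun v _ => hsplit v, Finset.sum_sub_distrib]
      congr 1
      · rw [pow_two, Finset.sum_mul_sum]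
      · have hv1 : ∀ v, ∑ w, (if p w = p v then x v * x w else 0)
            = x v * ∑ w ∈ Finset.univ.filter fun w => p w = p v, x w := by
          intro v
          rw [Finset.mul_sum, Finset.sum_filter]
        rw [Finset.sum_congr rfl fun v _ => hv1 v]
        rw [← Finset.sum_fiberwise Finset.univ p
          (fun v => x v * ∑ w ∈ Finset.univ.filter fun w => p w = p v, x w)]
        refine Finset.sum_congr rfl fun i _ => ?_
        have hcongr : ∀ v ∈ Finset.univ.filter fun v => p v = i,
            x v * (∑ w ∈ Finset.univ.filter fun w => p w = p v, x w)
            = x v * ∑ w ∈ Finset.univ.filter fun w => p w = i, x w := by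
          intro v hv; rw [(Finset.mem_filter.1 hv).2]
        rw [Finset.sum_congr rfl hcongr, pow_two, ← Finset.sum_mul]
    have h3 : ∑ v, x v * ((G.degree v : ℝ) * x v)
        = lam * (x ⬝ᵥ x) + ((t:ℝ) - 1) * x v0 ^ 2 := by
      have hterm : ∀ v, x v * ((G.degree v:ℝ) * x v)
          = lam * (x v * x v) + (if v = v0 then ((t:ℝ)-1) * x v ^ 2 else 0) := by
        intro v
        rw [hdegR v]
        by_cases h : v = v0 <;> simp [h] <;> ring
      rw [Finset.sum_congr rfl fun v _ => hterm v, Finset.sum_add_distrib,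
        Finset.sum_ite_eq' Finset.univ v0 (fun v => ((t:ℝ)-1) * x v ^ 2),
        if_pos (Finset.mem_univ v0), ← Finset.mul_sum, dotProduct]
    rw [h1, Finset.sum_add_distrib, h3, h2]
    ring
  -- the hyperplane functional
  set cvec : Fin (r*t+1) → ℝ := fun v => if p v = 0 then (r:ℝ) else (r:ℝ) - 1 with hcvec
  have hub : ∀ x : Fin (r*t+1) → ℝ, cvec ⬝ᵥ x = 0 →
      x ⬝ᵥ (signlessLap G *ᵥ x) ≤ lam * (x ⬝ᵥ x) := by
    intro x hx
    rw [hquad x]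
    set T : Finset (Fin (r+1)) := Finset.univ.erase 0 with hT
    set s : Fin (r+1) → ℝ := fun i => ∑ v ∈ Finset.univ.filter fun v => p v = i, x v with hs
    set u : ℝ := ∑ i ∈ T, s i with hu
    have hs0 : s 0 = x v0 := by rw [hs]; simp only [hfilter0, Finset.sum_singleton]
    have hsum_split : ∀ f : Fin (r+1) → ℝ, ∑ i, f i = f 0 + ∑ i ∈ T, f i := by
      intro f
      rw [hT, Finset.add_sum_erase Finset.univ f (Finset.mem_univ 0)]
    have htotal : ∑ v, x v = x v0 + u := by
      rw [← Finset.sum_fiberwise Finset.univ p x]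
      rw [show (∑ i : Fin (r+1), ∑ v ∈ Finset.univ.filter fun v => p v = i, x v)
          = ∑ i : Fin (r+1), s i from rfl]
      rw [hsum_split s, hs0, hu]
    have hTcard : (T.card : ℝ) = r := by
      rw [hT, Finset.card_erase_of_mem (Finset.mem_univ 0), Finset.card_univ,
        Fintype.card_fin]
      push_cast; ring
    have hCS : u ^ 2 ≤ (r:ℝ) * ∑ i ∈ T, s i ^ 2 := by
      have h := sq_sum_le_card_mul_sum_sq (s := T) (f := s)
      rw [hTcard] at h
      exact h
    have hconstraint : (r:ℝ) * x v0 + ((r:ℝ) - 1) * u = 0 := by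
      rw [← hx, dotProduct]
      have hsplit2 : ∀ v : Fin (r*t+1), cvec v * x v
          = if p v = 0 then (r:ℝ) * x v else ((r:ℝ)-1) * x v := by
        intro v
        rw [hcvec]
        by_cases h : p v = 0 <;> simp [h]
      rw [Finset.sum_congr rfl fun v _ => hsplit2 v, Finset.sum_ite]
      have e1 : ∑ v ∈ Finset.univ.filter fun v => p v = 0, (r:ℝ) * x v = (r:ℝ) * x v0 := by
        rw [hfilter0, Finset.sum_singleton]
      have e2 : ∑ v ∈ Finset.univ.filter fun v => ¬ p v = 0, ((r:ℝ)-1) * x v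
          = ((r:ℝ)-1) * u := by
        rw [← Finset.mul_sum]
        congr 1
        rw [hu]
        have := Finset.sum_fiberwise_eq_sum_filter Finset.univ T p x
        rw [this]
        congr 1
        ext v
        simp [hT]
      rw [e1, e2]
    have hsq_split : ∑ i : Fin (r+1), s i ^ 2 = x v0 ^ 2 + ∑ i ∈ T, s i ^ 2 := by
      rw [hsum_split (fun i => s i ^ 2), hs0]
    have key : (∑ v, x v) ^ 2
        - (∑ i : Fin (r+1), (∑ v ∈ Finset.univ.filter fun v => p v = i, x v) ^ 2)
        + ((t:ℝ) - 1) * x v0 ^ 2 ≤ 0 := by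
      have hAs : ∑ i : Fin (r+1), (∑ v ∈ Finset.univ.filter fun v => p v = i, x v) ^ 2
          = x v0 ^ 2 + ∑ i ∈ T, s i ^ 2 := hsq_split
      rw [htotal, hAs]
      set A : ℝ := ∑ i ∈ T, s i ^ 2 with hA
      set q : ℝ := x v0 with hq
      clear_value T s u A q
      -- goal : (q + u)^2 - (q^2 + A) + (t-1) q^2 ≤ 0
      have hr0 : (0:ℝ) < (r:ℝ) := by linarith
      have hCSr : (r:ℝ) * u^2 ≤ (r:ℝ)^2 * A := by nlinarith [hCS, hr0]
      have hG2 : (r:ℝ)^2 * ((q + u)^2 - (q^2 + A) + ((t:ℝ)-1) * q^2)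
          = ((r:ℝ)*q + (r:ℝ)*u)^2 - ((r:ℝ)*q)^2 - (r:ℝ)^2*A + ((t:ℝ)-1)*((r:ℝ)*q)^2 := by
        ring
      have hwu : (r:ℝ)*q + (r:ℝ)*u = u := by linarith
      have hq2 : ((r:ℝ)*q)^2 = ((r:ℝ)-1)^2 * u^2 := by
        have hf : (r:ℝ)*q = -(((r:ℝ)-1)*u) := by linarith
        rw [hf]; ring
      have h23 : ((t:ℝ)-2) * ((r:ℝ)-1)^2 ≤ ((r:ℝ)-1) := by nlinarith [h22, hr1R]
      have h24 : ((t:ℝ)-2) * ((r:ℝ)-1)^2 * u^2 ≤ ((r:ℝ)-1) * u^2 := by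
        nlinarith [h23, sq_nonneg u]
      have hgoal2 : (r:ℝ)^2 * ((q + u)^2 - (q^2 + A) + ((t:ℝ)-1) * q^2) ≤ 0 := by
        rw [hG2, hwu, hq2]
        nlinarith [hCSr, h24]
      have hr2 : (0:ℝ) < (r:ℝ)^2 := by positivity
      nlinarith [hgoal2, hr2]
    linarith
  -- two independent eigenvectors with eigenvalue lam
  set i1 : Fin (r+1) := ⟨1, by omega⟩ with hi1
  set i2 : Fin (r+1) := ⟨2, by omega⟩ with hi2
  have hne1 : i1 ≠ 0 := Fin.ne_of_val_ne (by simp [hi1])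
  have hne2 : i2 ≠ 0 := Fin.ne_of_val_ne (by simp [hi2])
  have hne12 : i1 ≠ i2 := Fin.ne_of_val_ne (by simp [hi1, hi2])
  have hpair : ∀ i : Fin (r+1), i ≠ 0 → ∃ a b : Fin (r*t+1), a ≠ b ∧ p a = i ∧ p b = i := by
    intro i hi0
    have h2 : 1 < (Finset.univ.filter fun v => p v = i).card := by
      rw [hcard_part i hi0]; omega
    obtain ⟨a, ha, b, hb, hab⟩ := Finset.one_lt_card.1 h2
    exact ⟨a, b, hab, (Finset.mem_filter.1 ha).2, (Finset.mem_filter.1 hb).2⟩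
  obtain ⟨a1, b1, hab1, hpa1, hpb1⟩ := hpair i1 hne1
  obtain ⟨a2, b2, hab2, hpa2, hpb2⟩ := hpair i2 hne2
  have heig : ∀ (a b : Fin (r*t+1)), a ≠ b → ∀ i : Fin (r+1), i ≠ 0 → p a = i → p b = i →
      signlessLap G *ᵥ (fun v => (if v = a then (1:ℝ) else 0) - (if v = b then 1 else 0))
        = lam • (fun v => (if v = a then (1:ℝ) else 0) - (if v = b then 1 else 0)) := by
    intro a b hab i hi0 hpa hpb
    funext w
    have hsum : (signlessLap G *ᵥ
        (fun v => (if v = a then (1:ℝ) else 0) - (if v = b then 1 else 0))) w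
        = signlessLap G w a - signlessLap G w b := by
      rw [mulVec, dotProduct]
      rw [show (∑ u, signlessLap G w u * ((if u = a then (1:ℝ) else 0) - (if u = b then 1 else 0)))
          = ∑ u, ((if u = a then signlessLap G w u else 0)
              - (if u = b then signlessLap G w u else 0)) from
        Finset.sum_congr rfl fun u _ => by
          by_cases h1 : u = a
          · simp [h1, hab]
          · by_cases h2 : u = b <;> simp [h1, h2, Ne.symm hab]]
      rw [Finset.sum_sub_distrib,
        Finset.sum_ite_eq' Finset.univ a (fun u => signlessLap G w u), if_pos (Finset.mem_univ a),
        Finset.sum_ite_eq' Finset.univ b (fun u => signlessLap G w u), if_pos (Finset.mem_univ b)]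
    rw [hsum, hQent w a, hQent w b, hpa, hpb]
    by_cases h1 : w = a
    · have h2 : w ≠ b := by rw [h1]; exact hab
      have hdw : (G.degree w : ℝ) = lam := by
        rw [h1, hdegt a (by rw [hpa]; exact hi0), hlamcast']
      simp only [Pi.smul_apply, smul_eq_mul, if_pos h1, if_neg h2, hdw]
      ring
    · by_cases h2 : w = b
      · have hdw : (G.degree w : ℝ) = lam := by
          rw [h2, hdegt b (by rw [hpb]; exact hi0), hlamcast']
        simp only [Pi.smul_apply, smul_eq_mul, if_pos h2, if_neg h1, hdw]
        ring
      · simp only [Pi.smul_apply, smul_eq_mul, if_neg h1, if_neg h2]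
        ring
  set y : Fin (r*t+1) → ℝ := fun v => (if v = a1 then 1 else 0) - (if v = b1 then 1 else 0)
    with hydef
  set z : Fin (r*t+1) → ℝ := fun v => (if v = a2 then 1 else 0) - (if v = b2 then 1 else 0)
    with hzdef
  have heigy : signlessLap G *ᵥ y = lam • y := heig a1 b1 hab1 i1 hne1 hpa1 hpb1
  have heigz : signlessLap G *ᵥ z = lam • z := heig a2 b2 hab2 i2 hne2 hpa2 hpb2
  have hd : ∀ v w : Fin (r*t+1), p v ≠ p w → v ≠ w := fun v w h hc => h (by rw [hc])
  have na1a2 : a1 ≠ a2 := hd _ _ (by rw [hpa1, hpa2]; exact hne12)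
  have na1b2 : a1 ≠ b2 := hd _ _ (by rw [hpa1, hpb2]; exact hne12)
  have na2b1 : a2 ≠ b1 := hd _ _ (by rw [hpa2, hpb1]; exact hne12.symm)
  have hindep : ∀ a b : ℝ, a • y + b • z = 0 → a = 0 ∧ b = 0 := by
    intro a b hab
    have h1 := congrFun hab a1
    have h2 := congrFun hab a2
    simp only [Pi.add_apply, Pi.smul_apply, smul_eq_mul, hydef, hzdef, Pi.zero_apply,
      if_pos rfl, hab1, hab2, na1a2, na1b2, na2b1, Ne.symm na1a2, if_neg] at h1 h2
    constructor
    · simpa using h1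
    · simpa using h2
  -- assemble
  have hcnt1 : (Finset.univ.filter fun k => lam < hQH.eigenvalues k).card ≤ 1 :=
    count_eig_gt_le_one hQH lam cvec hub
  have hcnt2 : 2 ≤ (Finset.univ.filter fun k => lam ≤ hQH.eigenvalues k).card :=
    two_le_count_eig_ge hQH lam y z heigy heigz hindep
  have hdim : 1 < Fintype.card (Fin (r*t+1)) := by
    rw [Fintype.card_fin]; omega
  rw [qEig, kthEig, dif_pos hQH, dif_pos (show 2 - 1 < Fintype.card (Fin (r*t+1)) from hdim)]
  have hs1 : (Finset.univ.filter fun j : Fin (Fintype.card (Fin (r*t+1))) =>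
      lam < hQH.eigenvalues ((Fintype.equivFin (Fin (r*t+1))).symm j)).card ≤ 1 := by
    rw [card_filter_comp_equiv (Fintype.equivFin (Fin (r*t+1))).symm
      (fun k => lam < hQH.eigenvalues k)]
    exact hcnt1
  have hs2 : 2 ≤ (Finset.univ.filter fun j : Fin (Fintype.card (Fin (r*t+1))) =>
      lam ≤ hQH.eigenvalues ((Fintype.equivFin (Fin (r*t+1))).symm j)).card := by
    rw [card_filter_comp_equiv (Fintype.equivFin (Fin (r*t+1))).symm
      (fun k => lam ≤ hQH.eigenvalues k)]
    exact hcnt2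
  exact sorted_second_largest _ lam hdim hs1 hs2
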